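/- Let n ≥ 1 and let S ⊆ {1,…,n} be a nonempty proper subset with |S| = k. Let a_1 < a_2 < … < a_k be the elements of S and b_1 < b_2 < … < b_{n−k} the elements of {1,…,n} \ S. Define f_S : ℝ^n → ℝ^k × ℝ^{n−k} by f_S(x_1,…,x_n) = ((x_{a_1},…,x_{a_k}), (x_{b_1} − k, …, x_{b_{n−k}} − k)). Then f_S maps the facet F_S of Π_{n−1} bijectively onto the product Π_{k−1} × Π_{n−k−1} of lower-dimensional permutohedra; that is, the image f_S(F_S) equals {(y,z) ∈ ℝ^k × ℝ^{n−k} : y ∈ Π_{k−1} and z ∈ Π_{n−k−1}}. -/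

import Mathlib

/-- The vertex `v_σ` of the permutohedron: its `i`-th coordinate is `σ⁻¹(i)`
(with values in `{1, …, m}`). -/
noncomputable def permuVertex (m : ℕ) (σ : Equiv.Perm (Fin m)) : Fin m → ℝ :=
  fun i => ((σ⁻¹ i : ℕ) : ℝ) + 1

/-- The `(m-1)`-dimensional permutohedron `Π_{m-1} ⊆ ℝ^m`: the convex hull
of the `m!` points `v_σ`. -/
noncomputable def permutohedron (m : ℕ) : Set (Fin m → ℝ) :=
  convexHull ℝ (Set.range (permuVertex m))

/-- The facet `F_S` of the permutohedron, for a nonempty proper `S ⊆ {1, …, n}` with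
`|S| = k`: the points of the permutohedron where `∑_{i ∈ S} x_i = k(k+1)/2`. -/
noncomputable def facet (n : ℕ) (S : Finset (Fin n)) : Set (Fin n → ℝ) :=
  {x ∈ permutohedron n |
    ∑ i ∈ S, x i = ((S.card : ℝ) * ((S.card : ℝ) + 1)) / 2}


section Aux

open Finset

lemma strictMono_le_val' {k : ℕ} {f : Fin k → ℕ} (hf : StrictMono f) :
    ∀ j : Fin k, (j : ℕ) ≤ f j := by
  have H : ∀ m : ℕ, ∀ j : Fin k, (j : ℕ) = m → m ≤ f j := by
    intro m
    induction m with
    | zero => intro j _; exact Nat.zero_le _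
    | succ m ih =>
      intro j hj
      have hm : m < k := by omega
      have h1 : m ≤ f ⟨m, hm⟩ := ih ⟨m, hm⟩ rfl
      have h2 : f ⟨m, hm⟩ < f j := hf (by simp only [Fin.lt_def, Fin.val_mk]; omega)
      omega
  intro j; exact H _ j rfl

lemma sum_orderEmb' {n k : ℕ} (T : Finset (Fin n)) (hT : T.card = k) (g : Fin n → ℕ) :
    ∑ i ∈ T, g i = ∑ j : Fin k, g (T.orderEmbOfFin hT j) := by
  have hT' : T = Finset.image (T.orderEmbOfFin hT) Finset.univ := by
    ext i
    simp only [Finset.mem_image, Finset.mem_univ, true_and]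
    rw [← Finset.mem_coe, ← Finset.range_orderEmbOfFin T hT]
    exact Set.mem_range.symm
  conv_lhs => rw [hT']
  rw [Finset.sum_image (fun x _ y _ h => (T.orderEmbOfFin hT).injective h)]

lemma filter_lt_eq_map' {n k : ℕ} (hkn : k ≤ n) :
    (Finset.univ.filter (fun i : Fin n => (i : ℕ) < k))
      = Finset.map (Fin.castLEEmb hkn) Finset.univ := by
  ext i
  simp only [Finset.mem_filter, Finset.mem_univ, true_and, Finset.mem_map]
  constructor
  · intro h
    exact ⟨⟨(i : ℕ), h⟩, by ext; simp [Fin.castLEEmb]⟩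
  · rintro ⟨j, rfl⟩
    simp [Fin.castLEEmb]

lemma sum_filter_lt' {n k : ℕ} (hkn : k ≤ n) :
    ∑ i ∈ Finset.univ.filter (fun i : Fin n => (i : ℕ) < k), (i : ℕ)
      = ∑ j ∈ Finset.range k, j := by
  rw [filter_lt_eq_map' hkn, Finset.sum_map]
  simp only [Fin.castLEEmb, Fin.coe_castLE]
  exact Fin.sum_univ_eq_sum_range (fun j => j) k

lemma core_ge' {n k : ℕ} (T : Finset (Fin n)) (hT : T.card = k) :
    ∑ j ∈ Finset.range k, j ≤ ∑ i ∈ T, (i : ℕ) := by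
  rw [sum_orderEmb' T hT (fun i => (i : ℕ)),
    ← Fin.sum_univ_eq_sum_range (fun j => j) k]
  exact Finset.sum_le_sum fun j _ =>
    strictMono_le_val' (fun a b hab => (T.orderEmbOfFin hT).strictMono hab) j

lemma core_eq_iff' {n k : ℕ} (T : Finset (Fin n)) (hT : T.card = k) :
    (∑ i ∈ T, (i : ℕ)) = (∑ j ∈ Finset.range k, j) ↔ ∀ i ∈ T, (i : ℕ) < k := by
  have hkn : k ≤ n := by
    calc k = T.card := hT.symm
    _ ≤ n := by simpa using T.card_le_univ
  constructor
  · intro heq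
    have hmono : StrictMono (fun j : Fin k => ((T.orderEmbOfFin hT j : Fin n) : ℕ)) :=
      fun a b hab => (T.orderEmbOfFin hT).strictMono hab
    have hle : ∀ j ∈ (Finset.univ : Finset (Fin k)),
        (j : ℕ) ≤ ((T.orderEmbOfFin hT j : Fin n) : ℕ) := fun j _ => strictMono_le_val' hmono j
    have hsum : ∑ j : Fin k, (j : ℕ) = ∑ j : Fin k, ((T.orderEmbOfFin hT j : Fin n) : ℕ) := by
      rw [← sum_orderEmb' T hT (fun i => (i : ℕ)), heq,
        ← Fin.sum_univ_eq_sum_range (fun j => j) k]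
    have hall := (Finset.sum_eq_sum_iff_of_le hle).1 hsum
    intro i hi
    have : i ∈ Set.range (T.orderEmbOfFin hT) := by
      rw [Finset.range_orderEmbOfFin]; exact hi
    obtain ⟨j, rfl⟩ := this
    have := hall j (Finset.mem_univ j)
    omega
  · intro hall
    have hsub : T ⊆ Finset.univ.filter (fun i : Fin n => (i : ℕ) < k) := by
      intro i hi
      simp only [Finset.mem_filter, Finset.mem_univ, true_and]
      exact hall i hi
    have hcard : (Finset.univ.filter (fun i : Fin n => (i : ℕ) < k)).card ≤ T.card := by
      rw [hT, filter_lt_eq_map' hkn, Finset.card_map, Finset.card_univ, Fintype.card_fin]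
    rw [Finset.eq_of_subset_of_card_le hsub hcard]
    exact sum_filter_lt' hkn

lemma gauss_real' (k : ℕ) :
    ((∑ j ∈ Finset.range k, j : ℕ) : ℝ) + k = ((k : ℝ) * ((k : ℝ) + 1)) / 2 := by
  induction k with
  | zero => simp
  | succ m ih =>
    rw [Finset.sum_range_succ]
    push_cast
    push_cast at ih
    ring_nf
    ring_nf at ih
    linarith

lemma vertex_sum_eq' {n k : ℕ} (S : Finset (Fin n)) (hk : S.card = k)
    (σ : Equiv.Perm (Fin n)) :
    ∑ i ∈ S, permuVertex n σ i
      = ((∑ i ∈ S, ((σ⁻¹ i : Fin n) : ℕ) : ℕ) : ℝ) + k := by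
  unfold permuVertex
  rw [Finset.sum_add_distrib]
  push_cast
  simp [hk]

lemma image_inv_card' {n k : ℕ} (S : Finset (Fin n)) (hk : S.card = k)
    (σ : Equiv.Perm (Fin n)) : (S.image (fun i => σ⁻¹ i)).card = k := by
  rw [Finset.card_image_of_injective _ (Equiv.injective _), hk]

lemma sum_inv_eq_image' {n : ℕ} (S : Finset (Fin n)) (σ : Equiv.Perm (Fin n)) :
    ∑ i ∈ S, ((σ⁻¹ i : Fin n) : ℕ) = ∑ t ∈ S.image (fun i => σ⁻¹ i), (t : ℕ) :=
  (Finset.sum_image (fun x _ y _ h => Equiv.injective _ h)).symm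

lemma vertex_sum_ge' {n k : ℕ} (S : Finset (Fin n)) (hk : S.card = k)
    (σ : Equiv.Perm (Fin n)) :
    ((k : ℝ) * ((k : ℝ) + 1)) / 2 ≤ ∑ i ∈ S, permuVertex n σ i := by
  rw [vertex_sum_eq' S hk σ, ← gauss_real' k]
  have h1 : ∑ j ∈ Finset.range k, j ≤ ∑ i ∈ S, ((σ⁻¹ i : Fin n) : ℕ) := by
    rw [sum_inv_eq_image' S σ]
    exact core_ge' _ (image_inv_card' S hk σ)
  have := (Nat.cast_le (α := ℝ)).2 h1
  linarith

lemma vertex_sum_eq_iff' {n k : ℕ} (S : Finset (Fin n)) (hk : S.card = k)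
    (σ : Equiv.Perm (Fin n)) :
    (∑ i ∈ S, permuVertex n σ i = ((k : ℝ) * ((k : ℝ) + 1)) / 2)
      ↔ (∀ i, i ∈ S ↔ ((σ⁻¹ i : Fin n) : ℕ) < k) := by
  have hkn : k ≤ n := by
    calc k = S.card := hk.symm
    _ ≤ n := by simpa using S.card_le_univ
  rw [vertex_sum_eq' S hk σ, ← gauss_real' k]
  constructor
  · intro heq
    have hnat : ∑ i ∈ S, ((σ⁻¹ i : Fin n) : ℕ) = ∑ j ∈ Finset.range k, j := by
      have := add_right_cancel heq
      exact_mod_cast this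
    rw [sum_inv_eq_image' S σ] at hnat
    have hdir := (core_eq_iff' _ (image_inv_card' S hk σ)).1 hnat
    -- every i ∈ S has (σ⁻¹ i) < k
    have hsub : S ⊆ Finset.univ.filter (fun i : Fin n => ((σ⁻¹ i : Fin n) : ℕ) < k) := by
      intro i hi
      simp only [Finset.mem_filter, Finset.mem_univ, true_and]
      exact hdir _ (Finset.mem_image_of_mem _ hi)
    have hUcard : (Finset.univ.filter (fun i : Fin n => ((σ⁻¹ i : Fin n) : ℕ) < k)).card = k := by
      have hUeq : Finset.univ.filter (fun i : Fin n => ((σ⁻¹ i : Fin n) : ℕ) < k)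
          = Finset.map σ.toEmbedding (Finset.univ.filter (fun i : Fin n => (i : ℕ) < k)) := by
        ext i
        simp only [Finset.mem_filter, Finset.mem_univ, true_and, Finset.mem_map,
          Equiv.coe_toEmbedding]
        constructor
        · intro h
          exact ⟨σ⁻¹ i, h, by simp⟩
        · rintro ⟨j, hj, rfl⟩
          simpa using hj
      rw [hUeq, Finset.card_map, filter_lt_eq_map' hkn, Finset.card_map, Finset.card_univ,
        Fintype.card_fin]
    have hSeq := Finset.eq_of_subset_of_card_le hsub (by rw [hUcard, hk])
    intro i
    rw [hSeq]
    simp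
  · intro hP
    have hnat : ∑ i ∈ S, ((σ⁻¹ i : Fin n) : ℕ) = ∑ j ∈ Finset.range k, j := by
      rw [sum_inv_eq_image' S σ]
      refine (core_eq_iff' _ (image_inv_card' S hk σ)).2 ?_
      intro t ht
      obtain ⟨i, hi, rfl⟩ := Finset.mem_image.1 ht
      exact (hP i).1 hi
    rw [hnat]

lemma face_of_hull' {E : Type*} [AddCommGroup E] [Module ℝ E] (t : Set E)
    (ℓ : E →ₗ[ℝ] ℝ) (c : ℝ) (h : ∀ y ∈ t, c ≤ ℓ y) :
    {x ∈ convexHull ℝ t | ℓ x = c} = convexHull ℝ {y ∈ t | ℓ y = c} := by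
  apply Set.Subset.antisymm
  · rintro x ⟨hx, hxc⟩
    rw [_root_.convexHull_eq] at hx
    obtain ⟨ι, s, w, z, hw0, hw1, hz, hcm⟩ := hx
    have hx' : x = ∑ i ∈ s, w i • z i := by
      rw [← hcm, Finset.centerMass_eq_of_sum_1 _ _ hw1]
    have hl : ∑ i ∈ s, w i * ℓ (z i) = c := by
      rw [← hxc, hx', map_sum]
      simp [map_smul, smul_eq_mul]
    have hkey : ∀ i ∈ s, w i ≠ 0 → ℓ (z i) = c := by
      by_contra hcon
      push_neg at hcon
      obtain ⟨i0, hi0, hwi0, hne⟩ := hcon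
      have hlt : ∑ i ∈ s, w i * c < ∑ i ∈ s, w i * ℓ (z i) := by
        apply Finset.sum_lt_sum
        · intro i hi
          exact mul_le_mul_of_nonneg_left (h _ (hz i hi)) (hw0 i hi)
        · refine ⟨i0, hi0, ?_⟩
          have h1 : c < ℓ (z i0) := lt_of_le_of_ne (h _ (hz i0 hi0)) (Ne.symm hne)
          have h2 : 0 < w i0 := lt_of_le_of_ne (hw0 i0 hi0) (Ne.symm hwi0)
          exact mul_lt_mul_of_pos_left h1 h2
      rw [← Finset.sum_mul, hw1, one_mul, hl] at hlt
      exact lt_irrefl c hlt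
    have hx2 : (s.filter (fun i => w i ≠ 0)).centerMass w z = x := by
      rw [Finset.centerMass_filter_ne_zero, hcm]
    rw [← hx2]
    apply Finset.centerMass_mem_convexHull
    · intro i hi
      exact hw0 i (Finset.mem_filter.1 hi).1
    · rw [Finset.sum_filter_ne_zero, hw1]
      exact one_pos
    · intro i hi
      obtain ⟨his, hwi⟩ := Finset.mem_filter.1 hi
      exact ⟨hz i his, hkey i his hwi⟩
  · have hconv : Convex ℝ {x ∈ convexHull ℝ t | ℓ x = c} :=
      (convex_convexHull ℝ t).inter (convex_hyperplane ℓ.isLinear c)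
    apply convexHull_min _ hconv
    rintro y ⟨hy, hyc⟩
    exact ⟨subset_convexHull ℝ t hy, hyc⟩

lemma image_vertex' {n k : ℕ} (S : Finset (Fin n)) (hk : S.card = k) (hkc : Sᶜ.card = n - k)
    (hkn : k ≤ n) :
    (fun x => ((fun j => x (S.orderEmbOfFin hk j),
        fun j => x (Sᶜ.orderEmbOfFin hkc j) - (k : ℝ)) :
        (Fin k → ℝ) × (Fin (n - k) → ℝ))) ''
      {y ∈ Set.range (permuVertex n) | ∑ i ∈ S, y i = ((k : ℝ) * ((k : ℝ) + 1)) / 2}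
    = (Set.range (permuVertex k)) ×ˢ (Set.range (permuVertex (n - k))) := by
  classical
  ext p
  constructor
  · rintro ⟨y, ⟨⟨σ, rfl⟩, hsum⟩, rfl⟩
    have hP := (vertex_sum_eq_iff' S hk σ).1 hsum
    constructor
    · -- first component
      have hlt : ∀ j : Fin k, ((σ⁻¹ (S.orderEmbOfFin hk j) : Fin n) : ℕ) < k :=
        fun j => (hP _).1 (S.orderEmbOfFin_mem hk j)
      let τfun : Fin k → Fin k := fun j => ⟨_, hlt j⟩
      have hτinj : Function.Injective τfun := by
        intro j1 j2 h12
        have hval := congrArg Fin.val h12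
        exact (S.orderEmbOfFin hk).injective (Equiv.injective _ (Fin.ext hval))
      refine ⟨(Equiv.ofBijective τfun (Finite.injective_iff_bijective.1 hτinj)).symm, ?_⟩
      funext j
      show ((((Equiv.ofBijective τfun _).symm)⁻¹ j : Fin k) : ℝ) + 1 = _
      rw [Equiv.Perm.inv_def, Equiv.symm_symm]
      rfl
    · -- second component
      have hge : ∀ j : Fin (n - k), k ≤ ((σ⁻¹ (Sᶜ.orderEmbOfFin hkc j) : Fin n) : ℕ) := by
        intro j
        have hnot : Sᶜ.orderEmbOfFin hkc j ∉ S :=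
          Finset.mem_compl.1 (Sᶜ.orderEmbOfFin_mem hkc j)
        by_contra hcon
        exact hnot ((hP _).2 (by omega))
      have hltnk : ∀ j : Fin (n - k), ((σ⁻¹ (Sᶜ.orderEmbOfFin hkc j) : Fin n) : ℕ) - k < n - k := by
        intro j
        have h1 := hge j
        have h2 := (σ⁻¹ (Sᶜ.orderEmbOfFin hkc j)).isLt
        omega
      let ρfun : Fin (n - k) → Fin (n - k) := fun j => ⟨_, hltnk j⟩
      have hρinj : Function.Injective ρfun := by
        intro j1 j2 h12
        have hval0 := congrArg Fin.val h12
        have hval : (((σ⁻¹ (Sᶜ.orderEmbOfFin hkc j1) : Fin n) : ℕ)) - k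
            = (((σ⁻¹ (Sᶜ.orderEmbOfFin hkc j2) : Fin n) : ℕ)) - k := hval0
        have h1 := hge j1
        have h2 := hge j2
        have hval' : (((σ⁻¹ (Sᶜ.orderEmbOfFin hkc j1) : Fin n) : ℕ))
            = (((σ⁻¹ (Sᶜ.orderEmbOfFin hkc j2) : Fin n) : ℕ)) := by omega
        exact (Sᶜ.orderEmbOfFin hkc).injective (Equiv.injective _ (Fin.ext hval'))
      refine ⟨(Equiv.ofBijective ρfun (Finite.injective_iff_bijective.1 hρinj)).symm, ?_⟩
      funext j
      show ((((Equiv.ofBijective ρfun _).symm)⁻¹ j : Fin (n - k)) : ℝ) + 1 = _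
      rw [Equiv.Perm.inv_def, Equiv.symm_symm]
      show ((((σ⁻¹ (Sᶜ.orderEmbOfFin hkc j) : Fin n) : ℕ) - k : ℕ) : ℝ) + 1
        = permuVertex n σ (Sᶜ.orderEmbOfFin hkc j) - (k : ℝ)
      rw [Nat.cast_sub (hge j)]
      unfold permuVertex
      ring
  · rintro ⟨⟨τ, hτ⟩, ⟨ρ, hρ⟩⟩
    set A := S.orderIsoOfFin hk with hA
    set B := Sᶜ.orderIsoOfFin hkc with hB
    have hbound : ∀ j : Fin (n - k), k + (ρ⁻¹ j : ℕ) < n := by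
      intro j
      have h1 := (ρ⁻¹ j).isLt
      -- n - k ≥ 1 since (ρ⁻¹ j) : Fin (n - k) inhabited
      omega
    let g : Fin n → Fin n := fun i =>
      if h : i ∈ S then Fin.castLE hkn (τ⁻¹ (A.symm ⟨i, h⟩))
      else ⟨k + (ρ⁻¹ (B.symm ⟨i, Finset.mem_compl.2 h⟩) : ℕ), hbound _⟩
    have hgS : ∀ i (h : i ∈ S), (g i : ℕ) = (τ⁻¹ (A.symm ⟨i, h⟩) : ℕ) := by
      intro i h
      simp only [g, dif_pos h, Fin.coe_castLE]
    have hgSc : ∀ i (h : i ∉ S),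
        (g i : ℕ) = k + (ρ⁻¹ (B.symm ⟨i, Finset.mem_compl.2 h⟩) : ℕ) := by
      intro i h
      simp only [g, dif_neg h]
    have hglt : ∀ i, i ∈ S ↔ (g i : ℕ) < k := by
      intro i
      by_cases h : i ∈ S
      · simp only [h, true_iff, hgS i h]
        exact (τ⁻¹ (A.symm ⟨i, h⟩)).isLt
      · simp only [h, false_iff, not_lt, hgSc i h]
        omega
    have hginj : Function.Injective g := by
      intro i1 i2 h12
      have hval : (g i1 : ℕ) = (g i2 : ℕ) := congrArg Fin.val h12
      by_cases h1 : i1 ∈ S <;> by_cases h2 : i2 ∈ S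
      · rw [hgS i1 h1, hgS i2 h2] at hval
        have h3 : A.symm ⟨i1, h1⟩ = A.symm ⟨i2, h2⟩ :=
          Equiv.injective _ (Fin.ext hval)
        have h4 : (⟨i1, h1⟩ : {x // x ∈ S}) = ⟨i2, h2⟩ := A.toEquiv.symm.injective h3
        exact congrArg Subtype.val h4
      · exfalso
        have ha := (hglt i1).1 h1
        have hb := (hglt i2)
        rw [← hval] at hb
        exact h2 (hb.2 ha)
      · exfalso
        have ha := (hglt i2).1 h2
        have hb := (hglt i1)
        rw [hval] at hb
        exact h1 (hb.2 ha)
      · rw [hgSc i1 h1, hgSc i2 h2] at hval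
        have h3 : B.symm ⟨i1, Finset.mem_compl.2 h1⟩ = B.symm ⟨i2, Finset.mem_compl.2 h2⟩ :=
          Equiv.injective ρ⁻¹ (Fin.ext (by omega))
        have h4 : (⟨i1, _⟩ : {x // x ∈ Sᶜ}) = ⟨i2, _⟩ := B.toEquiv.symm.injective h3
        exact congrArg Subtype.val h4
    let σ : Equiv.Perm (Fin n) :=
      (Equiv.ofBijective g (Finite.injective_iff_bijective.1 hginj)).symm
    have hσinv : ∀ i, σ⁻¹ i = g i := by
      intro i
      rw [Equiv.Perm.inv_def]
      show (Equiv.ofBijective g _).symm.symm i = g i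
      rw [Equiv.symm_symm]
      rfl
    have hPσ : ∀ i, i ∈ S ↔ ((σ⁻¹ i : Fin n) : ℕ) < k := by
      intro i
      rw [hσinv]
      exact hglt i
    refine ⟨permuVertex n σ, ⟨⟨σ, rfl⟩, (vertex_sum_eq_iff' S hk σ).2 hPσ⟩, ?_⟩
    have hAsymm : ∀ j : Fin k, A.symm ⟨S.orderEmbOfFin hk j, S.orderEmbOfFin_mem hk j⟩ = j := by
      intro j
      have : (⟨S.orderEmbOfFin hk j, S.orderEmbOfFin_mem hk j⟩ : {x // x ∈ S}) = A j :=
        Subtype.ext (S.coe_orderIsoOfFin_apply hk j).symm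
      rw [this]
      exact A.symm_apply_apply j
    have hBsymm : ∀ j : Fin (n - k),
        B.symm ⟨Sᶜ.orderEmbOfFin hkc j, Sᶜ.orderEmbOfFin_mem hkc j⟩ = j := by
      intro j
      have : (⟨Sᶜ.orderEmbOfFin hkc j, Sᶜ.orderEmbOfFin_mem hkc j⟩ : {x // x ∈ Sᶜ}) = B j :=
        Subtype.ext (Sᶜ.coe_orderIsoOfFin_apply hkc j).symm
      rw [this]
      exact B.symm_apply_apply j
    apply Prod.ext
    · show (fun j => permuVertex n σ (S.orderEmbOfFin hk j)) = p.1
      rw [← hτ]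
      funext j
      show ((σ⁻¹ (S.orderEmbOfFin hk j) : Fin n) : ℝ) + 1 = ((τ⁻¹ j : Fin k) : ℝ) + 1
      rw [hσinv]
      have hmem := S.orderEmbOfFin_mem hk j
      have : (g (S.orderEmbOfFin hk j) : ℕ) = (τ⁻¹ j : ℕ) := by
        rw [hgS _ hmem]
        congr 1
        · exact congrArg (fun t => τ⁻¹ t) (hAsymm j)
      rw [this]
    · show (fun j => permuVertex n σ (Sᶜ.orderEmbOfFin hkc j) - (k : ℝ)) = p.2
      rw [← hρ]
      funext j
      have hmem := Sᶜ.orderEmbOfFin_mem hkc j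
      have hnot : Sᶜ.orderEmbOfFin hkc j ∉ S := Finset.mem_compl.1 hmem
      show ((σ⁻¹ (Sᶜ.orderEmbOfFin hkc j) : Fin n) : ℝ) + 1 - (k : ℝ)
        = ((ρ⁻¹ j : Fin (n - k)) : ℝ) + 1
      rw [hσinv]
      have : (g (Sᶜ.orderEmbOfFin hkc j) : ℕ) = k + (ρ⁻¹ j : ℕ) := by
        rw [hgSc _ hnot]
        congr 1
        exact congrArg (fun t => ((ρ⁻¹ t : Fin (n - k)) : ℕ))
          (by rw [show (⟨Sᶜ.orderEmbOfFin hkc j, Finset.mem_compl.2 hnot⟩ : {x // x ∈ Sᶜ})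
                = ⟨Sᶜ.orderEmbOfFin hkc j, hmem⟩ from rfl]; exact hBsymm j)
      rw [this]
      push_cast
      ring

end Aux

/-- The map `f_S(x) = ((x_{a_1}, …, x_{a_k}), (x_{b_1} - k, …, x_{b_{n-k}} - k))`,
where `a_1 < … < a_k` enumerates `S` and `b_1 < … < b_{n-k}` enumerates the
complement of `S`, maps the facet `F_S` bijectively onto `Π_{k-1} × Π_{n-k-1}`. -/
theorem statement7 (n : ℕ) (hn : 1 ≤ n) (S : Finset (Fin n))
    (hS : S.Nonempty) (hS' : S ≠ Finset.univ)
    (k : ℕ) (hk : S.card = k) (hkc : Sᶜ.card = n - k)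
    (f : (Fin n → ℝ) → (Fin k → ℝ) × (Fin (n - k) → ℝ))
    (hf : ∀ x, f x = (fun j => x (S.orderEmbOfFin hk j),
                      fun j => x (Sᶜ.orderEmbOfFin hkc j) - (k : ℝ))) :
    Set.InjOn f (facet n S) ∧
    f '' facet n S =
      {p : (Fin k → ℝ) × (Fin (n - k) → ℝ) |
        p.1 ∈ permutohedron k ∧ p.2 ∈ permutohedron (n - k)} := by
  have hkn : k ≤ n := by
    calc k = S.card := hk.symm
    _ ≤ n := by simpa using S.card_le_univ
  constructor
  · intro x hx y hy hxy
    funext i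
    have hpair := (hf x).symm.trans (hxy.trans (hf y))
    by_cases hi : i ∈ S
    · obtain ⟨j, rfl⟩ : ∃ j, S.orderEmbOfFin hk j = i := by
        have : i ∈ Set.range (S.orderEmbOfFin hk) := by
          rw [Finset.range_orderEmbOfFin]; exact hi
        exact this
      exact congrFun (congrArg Prod.fst hpair) j
    · obtain ⟨j, rfl⟩ : ∃ j, Sᶜ.orderEmbOfFin hkc j = i := by
        have : i ∈ Set.range (Sᶜ.orderEmbOfFin hkc) := by
          rw [Finset.range_orderEmbOfFin]; exact Finset.mem_compl.2 hi
        exact this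
      have h2 := congrFun (congrArg Prod.snd hpair) j
      exact sub_left_inj.1 h2
  · -- the linear functional ∑_{i ∈ S} x i
    let Lsum : (Fin n → ℝ) →ₗ[ℝ] ℝ :=
      { toFun := fun x => ∑ i ∈ S, x i
        map_add' := fun x y => by simp [Finset.sum_add_distrib]
        map_smul' := fun c x => by simp [Finset.mul_sum] }
    have hge : ∀ y ∈ Set.range (permuVertex n),
        ((k : ℝ) * ((k : ℝ) + 1)) / 2 ≤ Lsum y := by
      rintro y ⟨σ, rfl⟩
      exact vertex_sum_ge' S hk σ
    have hfacet : facet n S =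
        convexHull ℝ {y ∈ Set.range (permuVertex n) |
          Lsum y = ((k : ℝ) * ((k : ℝ) + 1)) / 2} := by
      rw [← face_of_hull' _ _ _ hge]
      unfold facet permutohedron
      rw [hk]
      rfl
    -- the affine map
    let L : (Fin n → ℝ) →ₗ[ℝ] (Fin k → ℝ) × (Fin (n - k) → ℝ) :=
      { toFun := fun x => (fun j => x (S.orderEmbOfFin hk j),
          fun j => x (Sᶜ.orderEmbOfFin hkc j))
        map_add' := fun x y => rfl
        map_smul' := fun c x => rfl }
    let F : (Fin n → ℝ) →ᵃ[ℝ] (Fin k → ℝ) × (Fin (n - k) → ℝ) :=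
      AffineMap.mk' f L 0 (by
        intro p
        rw [hf p, hf 0]
        show _ = L (p - 0) + _
        rw [sub_zero]
        refine Prod.ext ?_ ?_ <;> funext j <;>
          show (_ : ℝ) = (_ : ℝ) + (_ : ℝ) <;> simp [L] <;> ring)
    have hfF : f = ⇑F := (AffineMap.coe_mk' f L 0 _).symm
    rw [hfacet, hfF, AffineMap.image_convexHull, ← hfF]
    have himg : f '' {y ∈ Set.range (permuVertex n) |
          Lsum y = ((k : ℝ) * ((k : ℝ) + 1)) / 2}
        = (Set.range (permuVertex k)) ×ˢ (Set.range (permuVertex (n - k))) := by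
      have hfun : f = fun x => ((fun j => x (S.orderEmbOfFin hk j),
          fun j => x (Sᶜ.orderEmbOfFin hkc j) - (k : ℝ)) :
          (Fin k → ℝ) × (Fin (n - k) → ℝ)) := funext hf
      rw [hfun]
      exact image_vertex' S hk hkc hkn
    rw [himg, convexHull_prod]
    rfl
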